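/- For the same 4-dimensional algebra, the symmetric bilinear form with matrix [[0,0,0,e],[0,0,-e,0],[0,-e,f,g],[e,0,g,h]] satisfies (x, y∘z) = -(y, x∘z) for all x,y,z, and the bosonic identity (x∘y)∘z = (x∘z)∘y holds. -/

import Mathlib

def mul4 (x y : Fin 4 → ℝ) : Fin 4 → ℝ :=
  ![x 2 * y 2, x 3 * y 2, 0, 0]

noncomputable def gform (e f g h : ℝ) (x y : Fin 4 → ℝ) : ℝ :=
  dotProduct x ((!![0, 0, 0, e; 0, 0, -e, 0; 0, -e, f, g; e, 0, g, h]).mulVec y)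

/-- bosonic identity holds and (x, y∘z) = -(y, x∘z). -/
theorem stmt6 (e f g h : ℝ) :
    (∀ x y z : Fin 4 → ℝ, mul4 (mul4 x y) z = mul4 (mul4 x z) y) ∧
    (∀ x y z : Fin 4 → ℝ,
      gform e f g h x (mul4 y z) = - gform e f g h y (mul4 x z)) := by
  constructor
  · intro x y z
    funext i
    fin_cases i <;> simp [mul4]
  · intro x y z
    simp [gform, mul4, dotProduct, Matrix.mulVec, Fin.sum_univ_four]
    ring
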